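/- The 3-dimensional Heisenberg Lie algebra 𝔥₃ (with basis e₁, e₂, e₃ and only nonzero bracket [e₁, e₂] = e₃) admits no inner product ⟨·,·⟩ satisfying ⟨[a, α], α⟩ = 0 for all a, α ∈ 𝔥₃. Consequently, the canonical spray of the Heisenberg group is not metrizable by a left-invariant Riemannian metric. -/

import Mathlib

noncomputable def Eh (i j : Fin 3) : Matrix (Fin 3) (Fin 3) ℝ :=
  Matrix.single i j (1 : ℝ)

lemma heis_bracket12 : ⁅(Eh 0 1), (Eh 1 2)⁆ = (Eh 0 2) := by
  show (Eh 0 1) * (Eh 1 2) - (Eh 1 2) * (Eh 0 1) = (Eh 0 2)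
  ext i j
  fin_cases i <;> fin_cases j <;>
    simp [Eh, Matrix.mul_apply, Matrix.single, Fin.sum_univ_succ]

lemma heis_bracket13 : ⁅(Eh 0 1), (Eh 0 2)⁆ = 0 := by
  show (Eh 0 1) * (Eh 0 2) - (Eh 0 2) * (Eh 0 1) = 0
  ext i j
  fin_cases i <;> fin_cases j <;>
    simp [Eh, Matrix.mul_apply, Matrix.single, Fin.sum_univ_succ]

lemma heis_e3_ne : (Eh 0 2) ≠ 0 := by
  intro h
  have := congrFun (congrFun h 0) 2
  simp [Eh, Matrix.single] at this

/-- The 3-dimensional Heisenberg Lie algebra `𝔥₃` — realized as the span of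
`e₁ = E₀₁`, `e₂ = E₁₂`, `e₃ = E₀₂` inside `𝔤𝔩(3, ℝ)`, with only nonzero bracket
`[e₁, e₂] = e₃` — admits no inner product `⟨·,·⟩` satisfying `⟨[a, α], α⟩ = 0`
for all `a, α ∈ 𝔥₃`.  Consequently the canonical spray of the Heisenberg group
is not metrizable by a left-invariant Riemannian metric. -/
theorem heisenberg_no_invariant_inner_product :
    ¬ ∃ B : LinearMap.BilinForm ℝ (Matrix (Fin 3) (Fin 3) ℝ),
      (∀ x ∈ Submodule.span ℝ
          {Matrix.single (0 : Fin 3) (1 : Fin 3) (1 : ℝ),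
           Matrix.single (1 : Fin 3) (2 : Fin 3) (1 : ℝ),
           Matrix.single (0 : Fin 3) (2 : Fin 3) (1 : ℝ)},
        ∀ y ∈ Submodule.span ℝ
          {Matrix.single (0 : Fin 3) (1 : Fin 3) (1 : ℝ),
           Matrix.single (1 : Fin 3) (2 : Fin 3) (1 : ℝ),
           Matrix.single (0 : Fin 3) (2 : Fin 3) (1 : ℝ)},
        B x y = B y x) ∧
      (∀ x ∈ Submodule.span ℝ
          {Matrix.single (0 : Fin 3) (1 : Fin 3) (1 : ℝ),
           Matrix.single (1 : Fin 3) (2 : Fin 3) (1 : ℝ),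
           Matrix.single (0 : Fin 3) (2 : Fin 3) (1 : ℝ)},
        x ≠ 0 → 0 < B x x) ∧
      (∀ a ∈ Submodule.span ℝ
          {Matrix.single (0 : Fin 3) (1 : Fin 3) (1 : ℝ),
           Matrix.single (1 : Fin 3) (2 : Fin 3) (1 : ℝ),
           Matrix.single (0 : Fin 3) (2 : Fin 3) (1 : ℝ)},
        ∀ α ∈ Submodule.span ℝ
          {Matrix.single (0 : Fin 3) (1 : Fin 3) (1 : ℝ),
           Matrix.single (1 : Fin 3) (2 : Fin 3) (1 : ℝ),
           Matrix.single (0 : Fin 3) (2 : Fin 3) (1 : ℝ)},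
        B ⁅a, α⁆ α = 0) := by
  rintro ⟨B, -, hpos, hinv⟩
  have h1 : (Eh 0 1) ∈ Submodule.span ℝ
      ({(Eh 0 1), (Eh 1 2), (Eh 0 2)} : Set (Matrix (Fin 3) (Fin 3) ℝ)) :=
    Submodule.subset_span (by simp [Eh])
  have h2 : (Eh 1 2) ∈ Submodule.span ℝ
      ({(Eh 0 1), (Eh 1 2), (Eh 0 2)} : Set (Matrix (Fin 3) (Fin 3) ℝ)) :=
    Submodule.subset_span (by simp [Eh])
  have h3 : (Eh 0 2) ∈ Submodule.span ℝ
      ({(Eh 0 1), (Eh 1 2), (Eh 0 2)} : Set (Matrix (Fin 3) (Fin 3) ℝ)) :=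
    Submodule.subset_span (by simp [Eh])
  have hA : B (Eh 0 2) (Eh 1 2) = 0 := by
    have := hinv _ h1 _ h2
    rwa [heis_bracket12] at this
  have hBsum : B (Eh 0 2) ((Eh 1 2) + (Eh 0 2)) = 0 := by
    have := hinv _ h1 _ (Submodule.add_mem _ h2 h3)
    rwa [show ⁅Eh 0 1, Eh 1 2 + Eh 0 2⁆ = ⁅Eh 0 1, Eh 1 2⁆ + ⁅Eh 0 1, Eh 0 2⁆ by simp only [Ring.lie_def]; noncomm_ring, heis_bracket12, heis_bracket13, add_zero] at this
  have h33 : B (Eh 0 2) (Eh 0 2) = 0 := by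
    have := hBsum
    rw [map_add, hA, zero_add] at this
    exact this
  have := hpos _ h3 heis_e3_ne
  rw [h33] at this
  exact lt_irrefl 0 this
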